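/- Let n ≥ 1, N ≥ 1, and for k = 1,…,N let M⁽ᵏ⁾ be a real mₖ×n matrix with mₖ ≥ n+2 satisfying M⁽ᵏ⁾ᵀM⁽ᵏ⁾ = mₖ·Iₙ and 1ₘₖᵀM⁽ᵏ⁾ = 0ₙᵀ. If all the matrices have the same Kollo skewness, τ(M⁽ᵏ⁾) = τ₀ for every k, then the vertical concatenation [M⁽¹⁾; … ; M⁽ᴺ⁾] also has Kollo skewness τ₀. -/
import Mathlib


open Matrix

/-- The Kollo skewness of a sample matrix `M` with rows indexed by `ι`:
`τ(M) = (card ι)⁻¹ · Σᵢ (rᵢ·1ₙ)² · rᵢᵀ` where `rᵢ` denotes the `i`-th row. -/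
noncomputable def kolloSkew {ι : Type*} [Fintype ι] {n : ℕ}
    (M : Matrix ι (Fin n) ℝ) : Fin n → ℝ :=
  fun j => (Fintype.card ι : ℝ)⁻¹ * ∑ i, (∑ j', M i j') ^ 2 * M i j

theorem stmt_7 (n N : ℕ) (hn : 1 ≤ n) (hN : 1 ≤ N)
    (m : Fin N → ℕ) (hm : ∀ k, n + 2 ≤ m k)
    (M : ∀ k : Fin N, Matrix (Fin (m k)) (Fin n) ℝ)
    (hL1 : ∀ k, (M k)ᵀ * (M k) = (m k : ℝ) • (1 : Matrix (Fin n) (Fin n) ℝ))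
    (hL2 : ∀ k, ∀ j : Fin n, ∑ i, M k i j = 0)
    (τ₀ : Fin n → ℝ) (hτ : ∀ k, kolloSkew (M k) = τ₀)
    (C : Matrix ((k : Fin N) × Fin (m k)) (Fin n) ℝ)
    (hC : ∀ (k : Fin N) (i : Fin (m k)) (j : Fin n), C ⟨k, i⟩ j = M k i j) :
    kolloSkew C = τ₀ := by
  have hmpos : ∀ k, (0:ℝ) < (m k : ℝ) := by
    intro k
    exact_mod_cast Nat.lt_of_lt_of_le (Nat.succ_pos _) (hm k)
  have hsum : ∀ k (j : Fin n), ∑ i, (∑ j', M k i j') ^ 2 * M k i j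
      = (m k : ℝ) * τ₀ j := by
    intro k j
    have := congrFun (hτ k) j
    simp only [kolloSkew, Fintype.card_fin] at this
    field_simp at this
    rw [div_eq_iff (ne_of_gt (hmpos k))] at this
    linarith [this]
  funext j
  have hcard : (Fintype.card ((k : Fin N) × Fin (m k)) : ℝ) = ∑ k, (m k : ℝ) := by
    simp [Fintype.card_sigma]
  have hpos : (0:ℝ) < ∑ k, (m k : ℝ) :=
    Finset.sum_pos (fun k _ => hmpos k) (by simp [Finset.univ_nonempty_iff, Fin.pos_iff_nonempty.mp hN])
  simp only [kolloSkew, hcard]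
  rw [← Finset.univ_sigma_univ, Finset.sum_sigma]
  have : ∀ k : Fin N, ∑ i : Fin (m k), (∑ j', C ⟨k, i⟩ j') ^ 2 * C ⟨k, i⟩ j
      = (m k : ℝ) * τ₀ j := by
    intro k
    simp only [hC]
    exact hsum k j
  rw [Finset.sum_congr rfl (fun k _ => this k)]
  rw [← Finset.sum_mul]
  field_simp
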